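/- Let X be a compact complex manifold whose De Rham cohomology is pure. Then for every p ≤ k, F^p H^k_{DR}(X,ℂ) = ⊕_{i ≥ p} H^{i,k-i}_{DR}(X), where F^p H^k_{DR} is the Hodge filtration (classes representable by forms with all components of holomorphic degree ≥ p). -/

import Mathlib

namespace Stmt4

variable {K : Type} [Field K] {V : Type} [AddCommGroup V] [Module K V]

/-- A bigraded double complex structure on `V`: grading `g p q` (the `(p,q)`-forms),
`d1 = ∂`, `d2 = ∂̄`. -/
structure IsBigradedDC (g : ℤ → ℤ → Submodule K V) (d1 d2 : V →ₗ[K] V) : Prop where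
  internal : DirectSum.IsInternal (fun pq : ℤ × ℤ => g pq.1 pq.2)
  d1_sq : ∀ v : V, d1 (d1 v) = 0
  d2_sq : ∀ v : V, d2 (d2 v) = 0
  anticomm : ∀ v : V, d1 (d2 v) + d2 (d1 v) = 0
  d1_mem : ∀ p q : ℤ, ∀ v ∈ g p q, d1 v ∈ g (p + 1) q
  d2_mem : ∀ p q : ℤ, ∀ v ∈ g p q, d2 v ∈ g p (q + 1)

def transpose (g : ℤ → ℤ → Submodule K V) : ℤ → ℤ → Submodule K V := fun p q => g q p

/-- "`d1 x` runs at least `m` times": there are `u₁, …, u_m` with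
`∂x = ∂̄u₁, ∂u₁ = ∂̄u₂, …, ∂u_{m-1} = ∂̄u_m` (here `u l` is `u_{l+1}`). -/
def RunsTimes (g : ℤ → ℤ → Submodule K V) (d1 d2 : V →ₗ[K] V) (m : ℕ) (p q : ℤ) (x : V) :
    Prop :=
  ∃ u : ℕ → V, (∀ l : ℕ, u l ∈ g (p + 1 + (l : ℤ)) (q - 1 - (l : ℤ))) ∧
    (1 ≤ m → d1 x = d2 (u 0)) ∧ ∀ l : ℕ, l + 2 ≤ m → d1 (u l) = d2 (u (l + 1))

/-- `x` (a pure `(p,q)`-form) is `E_r`-closed. -/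
def ErClosed (g : ℤ → ℤ → Submodule K V) (d1 d2 : V →ₗ[K] V) (r : ℕ) (p q : ℤ) (x : V) :
    Prop :=
  d2 x = 0 ∧ RunsTimes g d1 d2 (r - 1) p q x

/-- "`d2 z` reaches `0` in at most `m` steps":
`∂̄z = ∂v_{m-2}, ∂̄v_{m-2} = ∂v_{m-3}, …, ∂̄v₀ = 0` (here `v l` is `v_{m-2-l}`). -/
def ReachesZero (g : ℤ → ℤ → Submodule K V) (d1 d2 : V →ₗ[K] V) (m : ℕ) (p q : ℤ) (z : V) :
    Prop :=
  ∃ v : ℕ → V, (∀ l : ℕ, v l ∈ g (p - 1 - (l : ℤ)) (q + 1 + (l : ℤ))) ∧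
    (m = 1 → d2 z = 0) ∧
    (2 ≤ m → d2 z = d1 (v 0) ∧ d2 (v (m - 2)) = 0 ∧
      ∀ l : ℕ, l + 3 ≤ m → d2 (v l) = d1 (v (l + 1)))

/-- `x` (a pure `(p,q)`-form) is `E_r`-exact. -/
def ErExact (g : ℤ → ℤ → Submodule K V) (d1 d2 : V →ₗ[K] V) (r : ℕ) (p q : ℤ) (x : V) :
    Prop :=
  ∃ z ξ : V, z ∈ g (p - 1) q ∧ ξ ∈ g p (q - 1) ∧ x = d1 z + d2 ξ ∧
    (r = 1 → z = 0) ∧ (2 ≤ r → ReachesZero g d1 d2 (r - 1) (p - 1) q z)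

/-- `x` is `Ē_r`-exact (the conjugate notion: swap `∂` and `∂̄`, transpose the bigrading). -/
def ErBarExact (g : ℤ → ℤ → Submodule K V) (d1 d2 : V →ₗ[K] V) (r : ℕ) (p q : ℤ) (x : V) :
    Prop :=
  ErExact (transpose g) d2 d1 r q p x

/-- `x` is `E_rĒ_r`-closed: both `∂x` and `∂̄x` run at least `r-1` times. -/
def ErErBarClosed (g : ℤ → ℤ → Submodule K V) (d1 d2 : V →ₗ[K] V) (r : ℕ) (p q : ℤ)
    (x : V) : Prop :=
  RunsTimes g d1 d2 (r - 1) p q x ∧ RunsTimes (transpose g) d2 d1 (r - 1) q p x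

/-- `x` is `E_rĒ_r`-exact: `x = ∂z + ∂∂̄ξ + ∂̄η` with `∂̄z` and `∂η`
reaching `0` in at most `r-1` steps. -/
def ErErBarExact (g : ℤ → ℤ → Submodule K V) (d1 d2 : V →ₗ[K] V) (r : ℕ) (p q : ℤ)
    (x : V) : Prop :=
  ∃ z ξ η : V, z ∈ g (p - 1) q ∧ ξ ∈ g (p - 1) (q - 1) ∧ η ∈ g p (q - 1) ∧
    x = d1 z + d1 (d2 ξ) + d2 η ∧
    (r = 1 → z = 0 ∧ η = 0) ∧
    (2 ≤ r → ReachesZero g d1 d2 (r - 1) (p - 1) q z ∧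
      ReachesZero (transpose g) d2 d1 (r - 1) (q - 1) p η)

/-- The total-degree-`k` part of the complex. -/
def TotDeg (g : ℤ → ℤ → Submodule K V) (k : ℤ) : Submodule K V := ⨆ p : ℤ, g p (k - p)

/-- `x` (of total degree `k`) is `d`-exact. -/
def DExact (g : ℤ → ℤ → Submodule K V) (d1 d2 : V →ₗ[K] V) (k : ℤ) (x : V) : Prop :=
  ∃ y ∈ TotDeg g (k - 1), x = d1 y + d2 y

/-- The De Rham cohomology in degree `k` is *full*: every `d`-closed form of total degree
`k` is, modulo `Im d`, a sum of `d`-closed pure-type forms. -/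
def DRFull (g : ℤ → ℤ → Submodule K V) (d1 d2 : V →ₗ[K] V) (k : ℤ) : Prop :=
  ∀ x ∈ TotDeg g k, d1 x + d2 x = 0 →
    ∃ (s : Finset ℤ) (c : ℤ → V),
      (∀ p ∈ s, c p ∈ g p (k - p) ∧ d1 (c p) = 0 ∧ d2 (c p) = 0) ∧
      ∃ y ∈ TotDeg g (k - 1), x = (∑ p ∈ s, c p) + (d1 y + d2 y)

/-- The De Rham cohomology in degree `k` is *pure*: the subspaces `H^{p,q}_{DR}` with
`p + q = k` are in direct sum. -/
def DRPureDeg (g : ℤ → ℤ → Submodule K V) (d1 d2 : V →ₗ[K] V) (k : ℤ) : Prop :=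
  ∀ (s : Finset ℤ) (c : ℤ → V),
    (∀ p ∈ s, c p ∈ g p (k - p) ∧ d1 (c p) = 0 ∧ d2 (c p) = 0) →
    DExact g d1 d2 k (∑ p ∈ s, c p) → ∀ p ∈ s, DExact g d1 d2 k (c p)

/-- Purity of the De Rham cohomology: `H^k_{DR} = ⊕_{p+q=k} H^{p,q}_{DR}` for every `k`. -/
def DRPure (g : ℤ → ℤ → Submodule K V) (d1 d2 : V →ₗ[K] V) : Prop :=
  (∀ k : ℤ, DRFull g d1 d2 k) ∧ ∀ k : ℤ, DRPureDeg g d1 d2 k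

/-- The (column) Frölicher spectral sequence degenerates at `E_r`: from page `r` on, the
spaces of `E_s`-closed and `E_s`-exact pure-type forms stabilise. -/
def DegenAt (g : ℤ → ℤ → Submodule K V) (d1 d2 : V →ₗ[K] V) (r : ℕ) : Prop :=
  ∀ s : ℕ, r ≤ s → ∀ p q : ℤ, ∀ x ∈ g p q,
    (ErClosed g d1 d2 s p q x ↔ ErClosed g d1 d2 (s + 1) p q x) ∧
    (ErExact g d1 d2 s p q x ↔ ErExact g d1 d2 (s + 1) p q x)

/-- `X` is a page-`r`-`∂∂̄`-manifold: the Frölicher spectral sequence degenerates at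
`E_{r+1}` and the De Rham cohomology is pure. -/
def PageDdbar (g : ℤ → ℤ → Submodule K V) (d1 d2 : V →ₗ[K] V) (r : ℕ) : Prop :=
  DegenAt g d1 d2 (r + 1) ∧ DRPure g d1 d2

/-- Dimension of a subquotient `Nm / (Dn ∩ Nm)`. -/
noncomputable def hdim (Nm Dn : Submodule K V) : ℕ :=
  Module.finrank K (↥Nm ⧸ (Dn.comap Nm.subtype))

section Proj

variable {A : ℤ × ℤ → Submodule K V}

noncomputable def proj (h : DirectSum.IsInternal A) (pq : ℤ × ℤ) : V →ₗ[K] V :=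
  (A pq).subtype ∘ₗ (DirectSum.component K (ℤ × ℤ) (fun pq => ↥(A pq)) pq) ∘ₗ
    (LinearEquiv.ofBijective (DirectSum.coeLinearMap A) h).symm.toLinearMap

theorem proj_apply (h : DirectSum.IsInternal A) (pq : ℤ × ℤ) (v : V) :
    proj h pq v = ((LinearEquiv.ofBijective (DirectSum.coeLinearMap A) h).symm v pq : V) := rfl

theorem proj_eq_zero (h : DirectSum.IsInternal A) {pq pq' : ℤ × ℤ} {v : V}
    (hv : v ∈ A pq) (hne : pq ≠ pq') : proj h pq' v = 0 := by
  rw [proj_apply, h.ofBijective_coeLinearMap_of_mem_ne hne hv, Submodule.coe_zero]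

theorem eq_zero_of_proj (h : DirectSum.IsInternal A) {v : V}
    (hz : ∀ pq, proj h pq v = 0) : v = 0 := by
  set e := LinearEquiv.ofBijective (DirectSum.coeLinearMap A) h with he
  have h0 : e.symm v = 0 := by
    apply DFinsupp.ext
    intro pq
    have := hz pq
    rw [proj_apply] at this
    rw [DFinsupp.zero_apply]
    exact Subtype.ext this
  have h1 := congrArg e h0
  rwa [LinearEquiv.apply_symm_apply, show e 0 = 0 from e.map_zero] at h1

theorem proj_zero_of_iSup (h : DirectSum.IsInternal A) {ι : Sort*} {S : ι → Submodule K V}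
    {pq : ℤ × ℤ} (hS : ∀ i, ∀ z ∈ S i, proj h pq z = 0) :
    ∀ v ∈ ⨆ i, S i, proj h pq v = 0 := by
  intro v hv
  refine Submodule.iSup_induction (motive := fun z => proj h pq z = 0) S hv hS (map_zero _) ?_
  intro a b ha hb
  rw [map_add, ha, hb, add_zero]


end Proj

-- DExact helper lemmas
theorem DExact_zero (g : ℤ → ℤ → Submodule K V) (d1 d2 : V →ₗ[K] V) (k : ℤ) :
    DExact g d1 d2 k 0 :=
  ⟨0, Submodule.zero_mem _, by rw [map_zero, map_zero, add_zero]⟩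

theorem DExact_add {g : ℤ → ℤ → Submodule K V} {d1 d2 : V →ₗ[K] V} {k : ℤ} {a b : V}
    (ha : DExact g d1 d2 k a) (hb : DExact g d1 d2 k b) : DExact g d1 d2 k (a + b) := by
  obtain ⟨ya, hya, ea⟩ := ha
  obtain ⟨yb, hyb, eb⟩ := hb
  exact ⟨ya + yb, Submodule.add_mem _ hya hyb, by rw [map_add, map_add, ea, eb]; abel⟩

theorem DExact_neg {g : ℤ → ℤ → Submodule K V} {d1 d2 : V →ₗ[K] V} {k : ℤ} {a : V}
    (ha : DExact g d1 d2 k a) : DExact g d1 d2 k (-a) := by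
  obtain ⟨ya, hya, ea⟩ := ha
  exact ⟨-ya, Submodule.neg_mem _ hya, by rw [map_neg, map_neg, ea]; abel⟩

/-- Let `X` be a compact complex manifold whose De Rham cohomology is
pure.  Then for every `p ≤ k`, `F^p H^k_{DR}(X,ℂ) = ⊕_{i ≥ p} H^{i,k-i}_{DR}(X)`:
a `d`-closed `k`-form `x` represents a class in the Hodge filtration level `F^p`
(i.e. is cohomologous to a `d`-closed form all of whose components have holomorphic
degree `≥ p`) if and only if it is cohomologous to a sum of `d`-closed pure-type forms of
holomorphic degrees `≥ p`. -/
theorem statement4 {W : Type} [AddCommGroup W] [Module ℂ W]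
    (g : ℤ → ℤ → Submodule ℂ W) (d1 d2 : W →ₗ[ℂ] W)
    (hdc : IsBigradedDC g d1 d2) (hpure : DRPure g d1 d2)
    (k p : ℤ) (hpk : p ≤ k) (x : W) (hx : x ∈ TotDeg g k) (hcl : d1 x + d2 x = 0) :
    (∃ x' ∈ (⨆ i : ℤ, ⨆ (_ : p ≤ i), g i (k - i)), d1 x' + d2 x' = 0 ∧
        ∃ y ∈ TotDeg g (k - 1), x - x' = d1 y + d2 y) ↔
      (∃ (s : Finset ℤ) (c : ℤ → W),
        (∀ i ∈ s, p ≤ i ∧ c i ∈ g i (k - i) ∧ d1 (c i) = 0 ∧ d2 (c i) = 0) ∧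
        ∃ y ∈ TotDeg g (k - 1), x = (∑ i ∈ s, c i) + (d1 y + d2 y)) := by
  classical
  obtain ⟨hfull, hpureDeg⟩ := hpure
  have hint := hdc.internal
  constructor
  · rintro ⟨x', hx'mem, hx'cl, y₀, hy₀, hxy₀⟩
    have hx'tot : x' ∈ TotDeg g k :=
      (iSup_le fun i => iSup_le fun _ => le_iSup (fun j => g j (k - j)) i : _ ≤ TotDeg g k) hx'mem
    obtain ⟨s, c, hc, y, hytot, hx'eq⟩ := hfull k x' hx'tot hx'cl
    have hyt2 := hytot
    rw [TotDeg, Submodule.mem_iSup_iff_exists_finsupp] at hyt2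
    obtain ⟨f, hf, hfsum0⟩ := hyt2
    have hfsum : ∑ l ∈ f.support, f l = y := hfsum0
    set t := f.support with ht
    set w' : W := ∑ l ∈ t, if l ≤ p - 2 then f l else 0 with hw'
    set w : W := ∑ l ∈ t, if l ≤ p - 1 then f l else 0 with hw
    set a : W := ∑ l ∈ t, if l = p - 1 then f l else 0 with ha
    have hwsplit : w = w' + a := by
      rw [hw, hw', ha, ← Finset.sum_add_distrib]
      refine Finset.sum_congr rfl fun l _ => ?_
      by_cases h1 : l ≤ p - 2
      · have h2 : l ≠ p - 1 := by omega
        have h3 : l ≤ p - 1 := by omega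
        rw [if_pos h3, if_pos h1, if_neg h2, add_zero]
      · by_cases h2 : l = p - 1
        · have h3 : l ≤ p - 1 := by omega
          rw [if_pos h3, if_neg h1, if_pos h2, zero_add]
        · have h3 : ¬ l ≤ p - 1 := by omega
          rw [if_neg h3, if_neg h1, if_neg h2, add_zero]
    have hamem : a ∈ g (p - 1) (k - p) := by
      rw [ha]
      refine Submodule.sum_mem _ fun l _ => ?_
      by_cases h2 : l = p - 1
      · subst h2
        rw [if_pos rfl]
        have hm := hf (p - 1)
        rwa [show (k - 1 - (p - 1) : ℤ) = k - p from by omega] at hm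
      · rw [if_neg h2]; exact Submodule.zero_mem _
    have hwmem : w ∈ TotDeg g (k - 1) := by
      rw [hw, TotDeg]
      refine Submodule.sum_mem _ fun l _ => ?_
      by_cases h1 : l ≤ p - 1
      · rw [if_pos h1]
        exact le_iSup (fun j => g j (k - 1 - j)) l (hf l)
      · rw [if_neg h1]; exact Submodule.zero_mem _
    set lo := s.filter (fun i => ¬ p ≤ i) with hlo
    set hi := s.filter (fun i => p ≤ i) with hhi
    have hsplit : ∑ i ∈ hi, c i + ∑ i ∈ lo, c i = ∑ i ∈ s, c i :=
      Finset.sum_filter_add_sum_filter_not s (fun i => p ≤ i) c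
    have hveq : (∑ i ∈ lo, c i) + d1 w' + d2 w
        = x' - (∑ i ∈ hi, c i) - d1 (y - w') - d2 (y - w) := by
      rw [map_sub, map_sub, hx'eq, ← hsplit]; abel
    have hyw' : y - w' = ∑ l ∈ t, if l ≤ p - 2 then 0 else f l := by
      rw [← hfsum, hw', ← Finset.sum_sub_distrib]
      refine Finset.sum_congr rfl fun l _ => ?_
      by_cases h1 : l ≤ p - 2 <;> simp [h1]
    have hyw : y - w = ∑ l ∈ t, if l ≤ p - 1 then 0 else f l := by
      rw [← hfsum, hw, ← Finset.sum_sub_distrib]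
      refine Finset.sum_congr rfl fun l _ => ?_
      by_cases h1 : l ≤ p - 1 <;> simp [h1]
    have hv0 : (∑ i ∈ lo, c i) + d1 w' + d2 w = 0 := by
      refine eq_zero_of_proj hint ?_
      rintro ⟨pi, qi⟩
      by_cases hpi : pi < p
      · rw [hveq, map_sub, map_sub, map_sub]
        have h1 : proj hint (pi, qi) x' = 0 := by
          refine proj_zero_of_iSup hint (S := fun i => ⨆ (_ : p ≤ i), g i (k - i)) ?_ x' hx'mem
          intro i
          refine proj_zero_of_iSup hint (S := fun _ : p ≤ i => g i (k - i)) ?_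
          intro hple z hz
          exact proj_eq_zero hint (pq := (i, k - i)) hz
            (by intro hEq; rw [Prod.mk.injEq] at hEq; omega)
        have h2 : proj hint (pi, qi) (∑ i ∈ hi, c i) = 0 := by
          rw [map_sum]
          refine Finset.sum_eq_zero fun i hi' => ?_
          have hps : p ≤ i := (Finset.mem_filter.mp hi').2
          exact proj_eq_zero hint (pq := (i, k - i)) (hc i (Finset.mem_filter.mp hi').1).1
            (by intro hEq; rw [Prod.mk.injEq] at hEq; omega)
        have h3 : proj hint (pi, qi) (d1 (y - w')) = 0 := by
          rw [hyw', map_sum, map_sum]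
          refine Finset.sum_eq_zero fun l _ => ?_
          by_cases h1 : l ≤ p - 2
          · rw [if_pos h1, map_zero, map_zero]
          · rw [if_neg h1]
            exact proj_eq_zero hint (pq := (l + 1, k - 1 - l))
              (hdc.d1_mem l (k - 1 - l) (f l) (hf l))
              (by intro hEq; rw [Prod.mk.injEq] at hEq; omega)
        have h4 : proj hint (pi, qi) (d2 (y - w)) = 0 := by
          rw [hyw, map_sum, map_sum]
          refine Finset.sum_eq_zero fun l _ => ?_
          by_cases h1 : l ≤ p - 1
          · rw [if_pos h1, map_zero, map_zero]
          · rw [if_neg h1]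
            exact proj_eq_zero hint (pq := (l, k - 1 - l + 1))
              (hdc.d2_mem l (k - 1 - l) (f l) (hf l))
              (by intro hEq; rw [Prod.mk.injEq] at hEq; omega)
        rw [h1, h2, h3, h4]; simp
      · rw [map_add, map_add]
        have h1 : proj hint (pi, qi) (∑ i ∈ lo, c i) = 0 := by
          rw [map_sum]
          refine Finset.sum_eq_zero fun i hi' => ?_
          have hps : ¬ p ≤ i := (Finset.mem_filter.mp hi').2
          exact proj_eq_zero hint (pq := (i, k - i)) (hc i (Finset.mem_filter.mp hi').1).1
            (by intro hEq; rw [Prod.mk.injEq] at hEq; omega)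
        have h2 : proj hint (pi, qi) (d1 w') = 0 := by
          rw [hw', map_sum, map_sum]
          refine Finset.sum_eq_zero fun l _ => ?_
          by_cases h1 : l ≤ p - 2
          · rw [if_pos h1]
            exact proj_eq_zero hint (pq := (l + 1, k - 1 - l))
              (hdc.d1_mem l (k - 1 - l) (f l) (hf l))
              (by intro hEq; rw [Prod.mk.injEq] at hEq; omega)
          · rw [if_neg h1, map_zero, map_zero]
        have h3 : proj hint (pi, qi) (d2 w) = 0 := by
          rw [hw, map_sum, map_sum]
          refine Finset.sum_eq_zero fun l _ => ?_
          by_cases h1 : l ≤ p - 1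
          · rw [if_pos h1]
            exact proj_eq_zero hint (pq := (l, k - 1 - l + 1))
              (hdc.d2_mem l (k - 1 - l) (f l) (hf l))
              (by intro hEq; rw [Prod.mk.injEq] at hEq; omega)
          · rw [if_neg h1, map_zero, map_zero]
        rw [h1, h2, h3]; simp
    have hkey : d1 a = (∑ i ∈ lo, c i) + (d1 w + d2 w) := by
      have hdw : d1 w = d1 w' + d1 a := by rw [hwsplit, map_add]
      rw [hdw, ← sub_eq_zero,
        show d1 a - ((∑ i ∈ lo, c i) + (d1 w' + d1 a + d2 w))
          = -((∑ i ∈ lo, c i) + d1 w' + d2 w) from by abel, hv0, neg_zero]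
    have hlo1 : d1 (∑ i ∈ lo, c i) = 0 := by
      rw [map_sum]
      exact Finset.sum_eq_zero fun i hi' => (hc i (Finset.mem_filter.mp hi').1).2.1
    have hlo2 : d2 (∑ i ∈ lo, c i) = 0 := by
      rw [map_sum]
      exact Finset.sum_eq_zero fun i hi' => (hc i (Finset.mem_filter.mp hi').1).2.2
    have hd1d2w : d1 (d2 w) = 0 := by
      have h := congrArg d1 hkey
      rw [hdc.d1_sq, map_add, map_add, hlo1, hdc.d1_sq, zero_add, zero_add] at h
      exact h.symm
    have hd2d1a : d2 (d1 a) = 0 := by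
      have h := congrArg d2 hkey
      rw [map_add, map_add, hlo2, hdc.d2_sq, zero_add, add_zero] at h
      have hanti := hdc.anticomm w
      rw [hd1d2w, zero_add] at hanti
      rw [h, hanti]
    have hd1a_mem : d1 a ∈ g p (k - p) := by
      have h := hdc.d1_mem (p - 1) (k - p) a hamem
      rwa [show (p - 1 + 1 : ℤ) = p from by omega] at h
    have hpnot : p ∉ lo := fun h => (Finset.mem_filter.mp h).2 le_rfl
    set c'' : ℤ → W := fun i => if i = p then d1 a else -c i with hc''
    have hcond : ∀ i ∈ insert p lo, c'' i ∈ g i (k - i) ∧ d1 (c'' i) = 0 ∧ d2 (c'' i) = 0 := by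
      intro i hi'
      rcases Finset.mem_insert.mp hi' with rfl | hilo
      · rw [show c'' i = d1 a from if_pos rfl]
        exact ⟨hd1a_mem, hdc.d1_sq a, hd2d1a⟩
      · have hips : ¬ p ≤ i := (Finset.mem_filter.mp hilo).2
        have hne : i ≠ p := by omega
        rw [show c'' i = -c i from if_neg hne]
        obtain ⟨hm, h1, h2⟩ := hc i (Finset.mem_filter.mp hilo).1
        exact ⟨Submodule.neg_mem _ hm, by rw [map_neg, h1, neg_zero],
          by rw [map_neg, h2, neg_zero]⟩
    have hcneg : ∑ i ∈ lo, c'' i = -∑ i ∈ lo, c i := by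
      rw [← Finset.sum_neg_distrib]
      refine Finset.sum_congr rfl fun i hi' => ?_
      have hips : ¬ p ≤ i := (Finset.mem_filter.mp hi').2
      exact if_neg (by omega)
    have hsum'' : ∑ i ∈ insert p lo, c'' i = d1 w + d2 w := by
      rw [Finset.sum_insert hpnot, show c'' p = d1 a from if_pos rfl, hcneg, hkey]
      abel
    have hDE := hpureDeg k (insert p lo) c'' hcond ⟨w, hwmem, hsum''⟩
    have hloDE : DExact g d1 d2 k (∑ i ∈ lo, c i) := by
      have h2 : ∀ i ∈ lo, DExact g d1 d2 k (c'' i) := fun i hi' =>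
        hDE i (Finset.mem_insert_of_mem hi')
      have h3 : DExact g d1 d2 k (∑ i ∈ lo, c'' i) :=
        Finset.sum_induction _ _ (fun _ _ => DExact_add) (DExact_zero g d1 d2 k) h2
      have h4 := DExact_neg h3
      rwa [hcneg, neg_neg] at h4
    obtain ⟨Y, hYmem, hYeq⟩ := hloDE
    refine ⟨hi, c, ?_, Y + y + y₀, ?_, ?_⟩
    · intro i hi'
      have hm := Finset.mem_filter.mp hi'
      exact ⟨hm.2, (hc i hm.1).1, (hc i hm.1).2.1, (hc i hm.1).2.2⟩
    · exact Submodule.add_mem _ (Submodule.add_mem _ hYmem hytot) hy₀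
    · have hx2 : x = x' + (d1 y₀ + d2 y₀) := by rw [← hxy₀]; abel
      rw [hx2, hx'eq, ← hsplit, hYeq, map_add, map_add, map_add, map_add]
      abel
  · rintro ⟨s, c, hc, y, hy, hxeq⟩
    refine ⟨∑ i ∈ s, c i, ?_, ?_, y, hy, ?_⟩
    · refine Submodule.sum_mem _ fun i hi' => ?_
      obtain ⟨hpi, hm, _, _⟩ := hc i hi'
      exact Submodule.mem_iSup_of_mem i (Submodule.mem_iSup_of_mem hpi hm)
    · rw [map_sum, map_sum, ← Finset.sum_add_distrib]
      refine Finset.sum_eq_zero fun i hi' => ?_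
      obtain ⟨_, _, h1, h2⟩ := hc i hi'
      rw [h1, h2, add_zero]
    · rw [hxeq]; abel

end Stmt4
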